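/- Let M be a b×v (0,1)-matrix over a field F of characteristic p, and a ∈ F a nonzero element such that −a has a square root t in F (t² = −a). Suppose every row of M has weight ≡ a mod p, and any two distinct rows have inner product ≡ 0 mod p. Then the rows of the b×(b+v) matrix A = [t·I_b | M] span a self-orthogonal code over F of dimension b. Moreover, if b = v, this code is self-dual. -/

import Mathlib

open Matrix Finset

section aux

variable {F : Type*} [Field F]

/-- The dot product as a bilinear form on `ι → F`. -/
noncomputable def dotBilin (ι : Type*) [Fintype ι] : LinearMap.BilinForm F (ι → F) :=
  LinearMap.mk₂ F (· ⬝ᵥ ·) (fun _ _ _ => add_dotProduct _ _ _)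
    (fun _ _ _ => smul_dotProduct _ _ _) (fun _ _ _ => dotProduct_add _ _ _)
    (fun _ _ _ => dotProduct_smul _ _ _)

lemma dotBilin_apply {ι : Type*} [Fintype ι] (u w : ι → F) :
    dotBilin ι u w = u ⬝ᵥ w := rfl

lemma dotBilin_refl {ι : Type*} [Fintype ι] : (dotBilin (F := F) ι).IsRefl := by
  intro u w h
  exact (dotProduct_comm w u).trans h

lemma dotBilin_nondegen {ι : Type*} [Fintype ι] [DecidableEq ι] :
    (dotBilin (F := F) ι).Nondegenerate := by
  refine (LinearMap.IsRefl.nondegenerate_iff_separatingLeft (B := dotBilin (F := F) ι)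
    (fun u w h => (dotProduct_comm w u).trans (by exact h))).mpr ?_
  intro u h
  funext x
  have := h (Pi.single x 1)
  rwa [dotBilin_apply, dotProduct_single, mul_one] at this

end aux

/-- If every row of a (0,1)-matrix M has weight ≡ a mod p (a ≠ 0) and
distinct rows have inner product ≡ 0 mod p, and t² = -a in F (char p), then the rows
of A = [t·I_b | M] span a self-orthogonal code of dimension b; if b = v it is
self-dual. -/
theorem stmt2 {F : Type*} [Field F] [DecidableEq F] (p b v : ℕ) (hp : p.Prime)
    [CharP F p] (M : Matrix (Fin b) (Fin v) F) (a t : F)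
    (ha0 : a ≠ 0) (ht : t ^ 2 = -a)
    (h01 : ∀ i j, M i j = 0 ∨ M i j = 1)
    (hw : ∀ i, (((Finset.univ.filter (fun j => M i j = 1)).card : ℕ) : F) = a)
    (hdd : ∀ i i', i ≠ i' →
      (((Finset.univ.filter (fun j => M i j = 1 ∧ M i' j = 1)).card : ℕ) : F) = 0)
    (A : Fin b → (Fin b ⊕ Fin v) → F)
    (hA : A = fun i => Sum.elim (fun i' => if i = i' then t else 0) (M i)) :
    (∀ u ∈ Submodule.span F (Set.range A),
      ∀ w ∈ Submodule.span F (Set.range A), u ⬝ᵥ w = 0) ∧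
    Module.finrank F (Submodule.span F (Set.range A)) = b ∧
    (b = v → ∀ u : (Fin b ⊕ Fin v) → F,
      u ∈ Submodule.span F (Set.range A) ↔
        ∀ x ∈ Submodule.span F (Set.range A), u ⬝ᵥ x = 0) := by
  have ht0 : t ≠ 0 := by
    intro h
    rw [h] at ht
    have h2 : (0 : F) ^ 2 = 0 := by norm_num
    rw [h2] at ht
    exact ha0 (neg_eq_zero.mp ht.symm)
  -- rows are pairwise orthogonal
  have hrow : ∀ i i', A i ⬝ᵥ A i' = 0 := by
    intro i i'
    subst hA
    unfold dotProduct
    simp only [Fintype.sum_sum_type, Sum.elim_inl, Sum.elim_inr]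
    have h1 : ∑ x : Fin b, (if i = x then t else 0) * (if i' = x then t else 0)
        = if i = i' then t ^ 2 else 0 := by
      rw [Finset.sum_eq_single i]
      · by_cases h : i = i'
        · simp [h, sq]
        · simp [h, Ne.symm h]
      · intro x _ hx; simp [Ne.symm hx]
      · simp
    have h2 : ∀ j, M i j * M i' j = if (M i j = 1 ∧ M i' j = 1) then 1 else 0 := by
      intro j
      rcases h01 i j with h | h <;> rcases h01 i' j with h' | h' <;> simp [h, h']
    have h3 : ∑ j, M i j * M i' j
        = (((Finset.univ.filter (fun j => M i j = 1 ∧ M i' j = 1)).card : ℕ) : F) := by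
      simp only [h2]
      rw [Finset.sum_boole]
    rw [h1, h3]
    by_cases h : i = i'
    · subst h
      have : Finset.univ.filter (fun j => M i j = 1 ∧ M i j = 1)
          = Finset.univ.filter (fun j => M i j = 1) := by
        ext j; simp
      rw [this, hw, if_pos rfl, ht]
      ring
    · rw [hdd i i' h, if_neg h, add_zero]
  set W := Submodule.span F (Set.range A) with hW
  -- self-orthogonality of the span
  have horth : ∀ u ∈ W, ∀ w ∈ W, u ⬝ᵥ w = 0 := by
    have step1 : ∀ i', ∀ n ∈ W, n ⬝ᵥ A i' = 0 := by
      intro i'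
      have : W ≤ LinearMap.ker ((dotBilin (Fin b ⊕ Fin v)).flip (A i')) := by
        rw [hW, Submodule.span_le]
        rintro _ ⟨i, rfl⟩
        simp only [SetLike.mem_coe, LinearMap.mem_ker, LinearMap.flip_apply]
        exact hrow i i'
      intro n hn
      exact this hn
    intro u hu
    have : W ≤ LinearMap.ker ((dotBilin (Fin b ⊕ Fin v)) u) := by
      rw [hW, Submodule.span_le]
      rintro _ ⟨i, rfl⟩
      simp only [SetLike.mem_coe, LinearMap.mem_ker]
      exact step1 i u hu
    intro w hw'
    exact this hw'
  -- linear independence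
  have hli : LinearIndependent F A := by
    rw [Fintype.linearIndependent_iff]
    intro g hg i
    have := congrFun hg (Sum.inl i)
    simp only [Finset.sum_apply, Pi.smul_apply, smul_eq_mul, Pi.zero_apply, hA,
      Sum.elim_inl] at this
    rw [Finset.sum_eq_single i (fun x _ hx => by simp [hx]) (by simp)] at this
    simp only [if_pos rfl] at this
    rcases mul_eq_zero.mp this with h | h
    · exact h
    · exact absurd h ht0
  have hrank : Module.finrank F W = b := by
    rw [hW, finrank_span_eq_card hli, Fintype.card_fin]
  refine ⟨horth, hrank, ?_⟩
  -- self-duality when b = v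
  intro hbv u
  subst hbv
  have hWorth : W ≤ (dotBilin (Fin b ⊕ Fin b)).orthogonal W := by
    intro w hw
    rw [LinearMap.BilinForm.mem_orthogonal_iff]
    intro n hn
    exact horth n hn w hw
  have hfr : Module.finrank F ((dotBilin (F := F) (Fin b ⊕ Fin b)).orthogonal W) = b := by
    rw [LinearMap.BilinForm.finrank_orthogonal dotBilin_nondegen, hrank]
    simp only [Module.finrank_pi, Fintype.card_sum, Fintype.card_fin]
    omega
  have heq : W = (dotBilin (F := F) (Fin b ⊕ Fin b)).orthogonal W :=
    Submodule.eq_of_le_of_finrank_eq hWorth (by rw [hrank, hfr])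
  constructor
  · intro hu x hx
    exact horth u hu x hx
  · intro h
    rw [heq, LinearMap.BilinForm.mem_orthogonal_iff]
    intro n hn
    rw [dotBilin_apply, dotProduct_comm]
    exact h n hn
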